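/- If n ≥ 2, then |Δ| ≤ m · (2·rg^max)^{n−2}. -/

import Mathlib

/-- Items are `Fin m`; a ranking is a bijection `Fin m ≃ Fin m`
(`rk i` is the rank of item `i`; lower rank = more preferred).
`IsBest rk S b` says that `b` is the item of `I ∖ S` with minimum rank,
i.e. `b = b(a, S)` for an agent with ranking `rk`. -/
def IsBest {m : ℕ} (rk : Fin m ≃ Fin m) (S : Finset (Fin m)) (b : Fin m) : Prop :=
  b ∉ S ∧ ∀ j ∉ S, rk b ≤ rk j

/-- `D rk i` : the set of items strictly preferred to `i` under the ranking `rk`. -/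
def D {m : ℕ} (rk : Fin m ≃ Fin m) (i : Fin m) : Finset (Fin m) :=
  Finset.univ.filter fun j => rk j < rk i

/-- `Δ` : the family of proper subsets `S ⊊ I` with `⋃_{a ≠ a₁} D(a, b(a,S)) = S`. -/
def Delta {A : Type*} {m : ℕ} (a₁ : A) (rk : A → Fin m ≃ Fin m) :
    Set (Finset (Fin m)) :=
  {S | S ⊂ Finset.univ ∧ ∀ b : A → Fin m, (∀ a, IsBest (rk a) S (b a)) →
    {j : Fin m | ∃ a, a ≠ a₁ ∧ j ∈ D (rk a) (b a)} = ↑S}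

/-- The ranks (as natural numbers) given to item `i` by the non-manipulators. -/
def nonManipRanks {A : Type*} [Fintype A] [DecidableEq A] {m : ℕ}
    (a₁ : A) (rk : A → Fin m ≃ Fin m) (i : Fin m) : Finset ℕ :=
  (Finset.univ.filter fun a => a ≠ a₁).image fun a => (rk a i : ℕ)

/-- The range of an item: `max_{a ≠ a₁} rk_a(i) − min_{a ≠ a₁} rk_a(i) + 1`. -/
def rg {A : Type*} [Fintype A] [DecidableEq A] {m : ℕ}
    (a₁ : A) (rk : A → Fin m ≃ Fin m) (i : Fin m) : ℕ :=
  WithBot.unbotD 0 (nonManipRanks a₁ rk i).max - WithTop.untopD 0 (nonManipRanks a₁ rk i).min + 1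

/-- `rg^max` : the maximum range of an item. -/
def rgMax {A : Type*} [Fintype A] [DecidableEq A] {m : ℕ}
    (a₁ : A) (rk : A → Fin m ≃ Fin m) : ℕ :=
  Finset.univ.sup fun i : Fin m => rg a₁ rk i

section Aux

variable {A : Type*} [Fintype A] [DecidableEq A] {m : ℕ}

lemma exists_isBest (rk : Fin m ≃ Fin m) {S : Finset (Fin m)} (hS : S ⊂ Finset.univ) :
    ∃ b, IsBest rk S b := by
  have h : Sᶜ.Nonempty := by
    rw [← Finset.card_pos, Finset.card_compl]
    have := Finset.card_lt_card hS
    simp only [Finset.card_univ, Fintype.card_fin] at this ⊢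
    omega
  obtain ⟨b, hb, hmin⟩ := Sᶜ.exists_min_image (fun j => rk j) h
  exact ⟨b, Finset.mem_compl.mp hb, fun j hj => hmin j (Finset.mem_compl.mpr hj)⟩

/-- A choice of best item for each agent. -/
noncomputable def bb (rk : A → Fin m ≃ Fin m) (S : Finset (Fin m))
    (h : S ⊂ Finset.univ) (a : A) : Fin m :=
  (exists_isBest (rk a) h).choose

lemma bb_isBest (rk : A → Fin m ≃ Fin m) (S : Finset (Fin m))
    (h : S ⊂ Finset.univ) (a : A) : IsBest (rk a) S (bb rk S h a) :=
  (exists_isBest (rk a) h).choose_spec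

lemma rank_le_cross (a₁ : A) (rk : A → Fin m ≃ Fin m) {a a' : A}
    (ha : a ≠ a₁) (ha' : a' ≠ a₁) (j : Fin m) :
    (rk a' j : ℕ) ≤ (rk a j : ℕ) + (rg a₁ rk j - 1) := by
  have h1 : (rk a j : ℕ) ∈ nonManipRanks a₁ rk j :=
    Finset.mem_image.mpr ⟨a, Finset.mem_filter.mpr ⟨Finset.mem_univ _, ha⟩, rfl⟩
  have h2 : (rk a' j : ℕ) ∈ nonManipRanks a₁ rk j :=
    Finset.mem_image.mpr ⟨a', Finset.mem_filter.mpr ⟨Finset.mem_univ _, ha'⟩, rfl⟩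
  have hne : (nonManipRanks a₁ rk j).Nonempty := ⟨_, h1⟩
  have hM : WithBot.unbotD 0 (nonManipRanks a₁ rk j).max = (nonManipRanks a₁ rk j).max' hne := by
    rw [← Finset.coe_max' hne]; rfl
  have hμ : WithTop.untopD 0 (nonManipRanks a₁ rk j).min = (nonManipRanks a₁ rk j).min' hne := by
    rw [← Finset.coe_min' hne]; rfl
  have hle1 : (rk a' j : ℕ) ≤ (nonManipRanks a₁ rk j).max' hne := Finset.le_max' _ _ h2
  have hle2 : (nonManipRanks a₁ rk j).min' hne ≤ (rk a j : ℕ) := Finset.min'_le _ _ h1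
  have hle3 : (nonManipRanks a₁ rk j).min' hne ≤ (rk a' j : ℕ) := Finset.min'_le _ _ h2
  unfold rg
  rw [hM, hμ]
  omega

lemma best_cross (a₁ : A) (rk : A → Fin m ≃ Fin m) {S : Finset (Fin m)}
    {a a₂ : A} (ha : a ≠ a₁) (ha₂ : a₂ ≠ a₁) {ba b₂ : Fin m}
    (hba : IsBest (rk a) S ba) (hb₂ : IsBest (rk a₂) S b₂) :
    (rk a₂ b₂ : ℕ) ≤ (rk a ba : ℕ) + (rgMax a₁ rk - 1) := by
  have h1 : (rk a₂ b₂ : ℕ) ≤ (rk a₂ ba : ℕ) := hb₂.2 ba hba.1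
  have h2 := rank_le_cross a₁ rk ha ha₂ ba
  have h3 : rg a₁ rk ba ≤ rgMax a₁ rk := Finset.le_sup (Finset.mem_univ ba)
  omega

end Aux

/-- if `n ≥ 2`, then `|Δ| ≤ m * (2 * rg^max) ^ (n − 2)`. -/
theorem statement8 {A : Type*} [Fintype A] [DecidableEq A] {m : ℕ}
    (a₁ : A) (rk : A → Fin m ≃ Fin m) (hn : 2 ≤ Fintype.card A) :
    (Delta a₁ rk).ncard ≤ m * (2 * rgMax a₁ rk) ^ (Fintype.card A - 2) := by
  classical
  rcases Set.eq_empty_or_nonempty (Delta a₁ rk) with hΔ | ⟨S₀, hS₀⟩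
  · simp [hΔ]
  obtain ⟨x₀, -, -⟩ := Finset.exists_of_ssubset hS₀.1
  have hm : 0 < m := x₀.pos
  obtain ⟨a₂, ha₂⟩ := Fintype.exists_ne_of_one_lt_card (by omega) a₁
  set g := rgMax a₁ rk with hgdef
  have hg : 1 ≤ g := by
    have h1 : 1 ≤ rg a₁ rk x₀ := Nat.le_add_left 1 _
    have h2 : rg a₁ rk x₀ ≤ g := Finset.le_sup (f := fun i => rg a₁ rk i) (Finset.mem_univ x₀)
    omega
  -- the encoding map
  let f : Finset (Fin m) → Fin m × ({a : A // a ≠ a₁ ∧ a ≠ a₂} → Fin (2 * g)) := fun S =>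
    if h : S ∈ Delta a₁ rk then
      (bb rk S h.1 a₂,
       fun a => ⟨min ((rk a.1 (bb rk S h.1 a.1) : ℕ)
           - ((rk a₂ (bb rk S h.1 a₂) : ℕ) - (g - 1))) (2 * g - 1),
         lt_of_le_of_lt (min_le_right _ _) (by omega)⟩)
    else (⟨0, hm⟩, fun _ => ⟨0, by omega⟩)
  have hinj : Set.InjOn f (Delta a₁ rk) := by
    intro S hS S' hS' hff
    simp only [f, dif_pos hS, dif_pos hS', Prod.mk.injEq] at hff
    obtain ⟨h2, hfun⟩ := hff
    have hbeq : ∀ a : A, a ≠ a₁ → bb rk S hS.1 a = bb rk S' hS'.1 a := by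
      intro a ha
      by_cases haa : a = a₂
      · subst haa; exact h2
      · have hv := congrArg Fin.val (congrFun hfun ⟨a, ha, haa⟩)
        simp only at hv
        have hyy : (rk a₂ (bb rk S hS.1 a₂) : ℕ) = (rk a₂ (bb rk S' hS'.1 a₂) : ℕ) := by
          rw [h2]
        have c1 := best_cross a₁ rk ha ha₂ (bb_isBest rk S hS.1 a) (bb_isBest rk S hS.1 a₂)
        have c2 := best_cross a₁ rk ha₂ ha (bb_isBest rk S hS.1 a₂) (bb_isBest rk S hS.1 a)
        have c1' := best_cross a₁ rk ha ha₂ (bb_isBest rk S' hS'.1 a) (bb_isBest rk S' hS'.1 a₂)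
        have c2' := best_cross a₁ rk ha₂ ha (bb_isBest rk S' hS'.1 a₂) (bb_isBest rk S' hS'.1 a)
        have hx : (rk a (bb rk S hS.1 a) : ℕ) = (rk a (bb rk S' hS'.1 a) : ℕ) := by
          omega
        exact (rk a).injective (Fin.ext hx)
    have e1 := hS.2 (bb rk S hS.1) (bb_isBest rk S hS.1)
    have e2 := hS'.2 (bb rk S' hS'.1) (bb_isBest rk S' hS'.1)
    have hsets : (↑S : Set (Fin m)) = ↑S' := by
      rw [← e1, ← e2]
      ext j
      simp only [Set.mem_setOf_eq]
      constructor
      · rintro ⟨a, ha, hj⟩; exact ⟨a, ha, (hbeq a ha) ▸ hj⟩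
      · rintro ⟨a, ha, hj⟩; exact ⟨a, ha, (hbeq a ha).symm ▸ hj⟩
    exact Finset.coe_injective hsets
  have hcount : (Delta a₁ rk).ncard ≤
      (Set.univ : Set (Fin m × ({a : A // a ≠ a₁ ∧ a ≠ a₂} → Fin (2 * g)))).ncard :=
    Set.ncard_le_ncard_of_injOn f (fun S _ => Set.mem_univ (f S)) hinj Set.finite_univ
  have hA₂ : Fintype.card {a : A // a ≠ a₁ ∧ a ≠ a₂} = Fintype.card A - 2 := by
    rw [Fintype.card_subtype]
    have heq : (Finset.univ.filter fun a : A => a ≠ a₁ ∧ a ≠ a₂)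
        = ({a₁, a₂} : Finset A)ᶜ := by
      ext a
      simp [not_or]
    rw [heq, Finset.card_compl, Finset.card_pair (Ne.symm ha₂)]
  have huniv : (Set.univ : Set (Fin m × ({a : A // a ≠ a₁ ∧ a ≠ a₂} → Fin (2 * g)))).ncard
      = m * (2 * g) ^ (Fintype.card A - 2) := by
    rw [Set.ncard_univ, Nat.card_eq_fintype_card, Fintype.card_prod, Fintype.card_fun,
      Fintype.card_fin, Fintype.card_fin, hA₂]
  rw [huniv] at hcount
  exact hcount
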